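/- Let K be a field, q ≥ 2, and let D ⊆ K² be a finite set of points on the curve x^{q+1} = y^q + y such that, for the degrevlex order with y > x, the sous-escalier N(In(I_D)) is exactly the set of monomials dividing x^{q-1} y^{μ-1} for some 1 ≤ μ ≤ q-1. Then |D| = μq and there exist F₁, F₂ ∈ I_D with leading monomials x^q and y^μ respectively, and I_D = ⟨F₁, F₂⟩. -/

import Mathlib

open MvPolynomial

/-- Strict degrevlex order (with y > x) on exponent pairs (x-exponent, y-exponent). -/
def drlLT (a b : ℕ × ℕ) : Prop :=
  a.1 + a.2 < b.1 + b.2 ∨ (a.1 + a.2 = b.1 + b.2 ∧ b.1 < a.1)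

/-- `IsLM F r s` : the leading monomial of `F` w.r.t. degrevlex with y > x is `x^r y^s`. -/
def IsLM {K : Type*} [CommRing K] (F : MvPolynomial (Fin 2) K) (r s : ℕ) : Prop :=
  (Finsupp.single (0 : Fin 2) r + Finsupp.single (1 : Fin 2) s) ∈ F.support ∧
    ∀ g ∈ F.support, g ≠ Finsupp.single (0 : Fin 2) r + Finsupp.single (1 : Fin 2) s →
      drlLT (g 0, g 1) (r, s)

/-- The initial ideal of `I` w.r.t. degrevlex with y > x. -/
noncomputable def initialIdeal {K : Type*} [Field K] (I : Ideal (MvPolynomial (Fin 2) K)) :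
    Ideal (MvPolynomial (Fin 2) K) :=
  Ideal.span {m | ∃ F ∈ I, ∃ r s : ℕ, IsLM F r s ∧ m = X 0 ^ r * X 1 ^ s}

/-- The vanishing ideal of a finite point set `D ⊆ K²`. -/
noncomputable def vanIdeal {K : Type*} [Field K] (D : Finset (K × K)) : Ideal (MvPolynomial (Fin 2) K) :=
  ⨅ p ∈ D, RingHom.ker (eval ![p.1, p.2] : MvPolynomial (Fin 2) K →+* K)

namespace Stmt18Aux

/-- A ℕ-valued strictly monotone injective measure for `drlLT`. -/
def dm (a : ℕ × ℕ) : ℕ := (a.1 + a.2) ^ 2 + a.2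

lemma dm_lt {a b : ℕ × ℕ} (h : drlLT a b) : dm a < dm b := by
  rcases h with h | ⟨h1, h2⟩
  · have h2 : a.2 ≤ a.1 + a.2 := Nat.le_add_left _ _
    have : a.1 + a.2 + 1 ≤ b.1 + b.2 := h
    unfold dm; nlinarith
  · unfold dm; rw [h1]; omega

lemma drlLT_tri (a b : ℕ × ℕ) : drlLT a b ∨ drlLT b a ∨ a = b := by
  rcases a with ⟨a1, a2⟩; rcases b with ⟨b1, b2⟩
  simp only [drlLT, Prod.mk.injEq]
  omega

lemma dm_inj {a b : ℕ × ℕ} (h : dm a = dm b) : a = b := by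
  rcases drlLT_tri a b with h' | h' | h'
  · exact absurd h (Nat.ne_of_lt (dm_lt h'))
  · exact absurd h.symm (Nat.ne_of_lt (dm_lt h'))
  · exact h'

lemma drlLT_add {a b : ℕ × ℕ} (c : ℕ × ℕ) (h : drlLT a b) :
    drlLT (c.1 + a.1, c.2 + a.2) (c.1 + b.1, c.2 + b.2) := by
  rcases h with h | h <;> unfold drlLT at * <;> simp at * <;> omega

lemma fin2_decomp (m : Fin 2 →₀ ℕ) :
    m = Finsupp.single 0 (m 0) + Finsupp.single 1 (m 1) := by
  ext i
  fin_cases i <;> simp [Finsupp.single_apply]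

lemma pr_inj {m n : Fin 2 →₀ ℕ} (h0 : m 0 = n 0) (h1 : m 1 = n 1) : m = n := by
  rw [fin2_decomp m, fin2_decomp n, h0, h1]

lemma sigma_apply0 (r s : ℕ) :
    (Finsupp.single (0 : Fin 2) r + Finsupp.single (1 : Fin 2) s) 0 = r := by
  simp [Finsupp.single_apply]

lemma sigma_apply1 (r s : ℕ) :
    (Finsupp.single (0 : Fin 2) r + Finsupp.single (1 : Fin 2) s) 1 = s := by
  simp [Finsupp.single_apply]

variable {K : Type*} [Field K]

lemma mem_vanIdeal {D : Finset (K × K)} {F : MvPolynomial (Fin 2) K} :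
    F ∈ vanIdeal D ↔ ∀ p ∈ D, eval ![p.1, p.2] F = 0 := by
  simp [vanIdeal, Submodule.mem_iInf, RingHom.mem_ker]

lemma exists_isLM (F : MvPolynomial (Fin 2) K) (hF : F ≠ 0) :
    ∃ r s : ℕ, IsLM F r s ∧ r = (Finsupp.single (0:Fin 2) r + Finsupp.single (1:Fin 2) s) 0 := by
  obtain ⟨b, hb, hmax⟩ := F.support.exists_max_image (fun m => dm (m 0, m 1))
    (Finset.nonempty_iff_ne_empty.mpr (fun h => hF (MvPolynomial.support_eq_empty.mp h)))
  refine ⟨b 0, b 1, ⟨?_, ?_⟩, (sigma_apply0 _ _).symm⟩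
  · rwa [← fin2_decomp b]
  · intro g hg hne
    rw [← fin2_decomp b] at hne
    rcases drlLT_tri (g 0, g 1) (b 0, b 1) with h | h | h
    · exact h
    · exact absurd (hmax g hg) (by simpa using dm_lt h)
    · exact absurd (pr_inj (congrArg Prod.fst h) (congrArg Prod.snd h)) hne


/-- Multiply `F₀` (with leading monomial `x^r y^s`) by a monomial so that the product has
coefficient `c` at `b` and all other support strictly `drlLT`-below `b`. -/
lemma mult_props (F₀ : MvPolynomial (Fin 2) K) {r s : ℕ} (h : IsLM F₀ r s)
    (b : Fin 2 →₀ ℕ) (hr : r ≤ b 0) (hs : s ≤ b 1) (c : K) :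
    ∃ G : MvPolynomial (Fin 2) K, (∃ H, G = H * F₀) ∧ G.coeff b = c ∧
      ∀ m ∈ G.support, m = b ∨ drlLT (m 0, m 1) (b 0, b 1) := by
  classical
  set σ : Fin 2 →₀ ℕ := Finsupp.single (0 : Fin 2) r + Finsupp.single (1 : Fin 2) s with hσ
  have hσ0 : σ 0 = r := sigma_apply0 r s
  have hσ1 : σ 1 = s := sigma_apply1 r s
  have hσb : σ ≤ b := by
    rw [Finsupp.le_def]; intro i
    fin_cases i
    · show σ 0 ≤ b 0; rw [hσ0]; exact hr
    · show σ 1 ≤ b 1; rw [hσ1]; exact hs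
  have hkey : (b - σ) + σ = b := tsub_add_cancel_of_le hσb
  have hlc : F₀.coeff σ ≠ 0 := mem_support_iff.mp h.1
  refine ⟨monomial (b - σ) (c * (F₀.coeff σ)⁻¹) * F₀, ⟨_, rfl⟩, ?_, ?_⟩
  · have h3 := coeff_monomial_mul σ (b - σ) (c * (F₀.coeff σ)⁻¹) F₀
    rw [hkey] at h3
    rw [h3, mul_assoc, inv_mul_cancel₀ hlc, mul_one]
  · intro m hm
    have := MvPolynomial.support_mul _ _ hm
    rw [Finset.mem_add] at this
    obtain ⟨u, hu, e, he, hue⟩ := this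
    have hu' : u = b - σ := by
      have := MvPolynomial.support_monomial_subset hu
      simpa using this
    subst hu'
    by_cases heσ : e = σ
    · left; rw [← hue, heσ, hkey]
    · right
      have hlt := h.2 e he heσ
      have h2 := drlLT_add (b 0 - r, b 1 - s) hlt
      simp only at h2
      rw [show b 0 - r + r = b 0 by omega, show b 1 - s + s = b 1 by omega] at h2
      have hm0 : m 0 = b 0 - r + e 0 := by
        rw [← hue]; simp [Finsupp.tsub_apply, hσ0]
      have hm1 : m 1 = b 1 - s + e 1 := by
        rw [← hue]; simp [Finsupp.tsub_apply, hσ1]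
      rw [hm0, hm1]
      exact h2

/-- Reduction modulo `F₁, F₂`. -/
lemma reduce {q μ : ℕ} (F₁ F₂ : MvPolynomial (Fin 2) K)
    (h1 : IsLM F₁ q 0) (h2 : IsLM F₂ 0 μ) (F : MvPolynomial (Fin 2) K) :
    ∃ r : MvPolynomial (Fin 2) K, F - r ∈ Ideal.span {F₁, F₂} ∧
      ∀ m ∈ r.support, m 0 < q ∧ m 1 < μ := by
  classical
  suffices H : ∀ n : ℕ, ∀ F : MvPolynomial (Fin 2) K,
      (F.support.filter (fun m => ¬(m 0 < q ∧ m 1 < μ))).sup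
        (fun m => dm (m 0, m 1) + 1) ≤ n →
      ∃ r : MvPolynomial (Fin 2) K, F - r ∈ Ideal.span {F₁, F₂} ∧
        ∀ m ∈ r.support, m 0 < q ∧ m 1 < μ by
    exact H _ F le_rfl
  intro n
  induction n using Nat.strong_induction_on with
  | _ n IH =>
    intro F hF
    by_cases hbad : (F.support.filter (fun m => ¬(m 0 < q ∧ m 1 < μ))).Nonempty
    · obtain ⟨b, hbmem, hbmax⟩ := Finset.exists_max_image _ (fun m => dm (m 0, m 1) + 1) hbad
      rw [Finset.mem_filter] at hbmem
      obtain ⟨hbsupp, hbbad⟩ := hbmem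
      -- get the cancelling multiple G
      have hGex : ∃ G : MvPolynomial (Fin 2) K, (∃ H, G = H * F₁ ∨ G = H * F₂) ∧
          G.coeff b = F.coeff b ∧
          ∀ m ∈ G.support, m = b ∨ drlLT (m 0, m 1) (b 0, b 1) := by
        by_cases hb0 : q ≤ b 0
        · obtain ⟨G, ⟨H, hH⟩, hc, hsupp⟩ :=
            mult_props F₁ h1 b hb0 (Nat.zero_le _) (F.coeff b)
          exact ⟨G, ⟨H, Or.inl hH⟩, hc, hsupp⟩
        · obtain ⟨G, ⟨H, hH⟩, hc, hsupp⟩ :=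
            mult_props F₂ h2 b (Nat.zero_le _) (by omega) (F.coeff b)
          exact ⟨G, ⟨H, Or.inr hH⟩, hc, hsupp⟩
      obtain ⟨G, ⟨H, hH⟩, hGc, hGsupp⟩ := hGex
      have hGspan : G ∈ Ideal.span {F₁, F₂} := by
        rcases hH with h | h <;> rw [h] <;>
          exact Ideal.mul_mem_left _ _ (Ideal.subset_span (by simp))
      set F' := F - G with hF'
      have hfb : 1 ≤ dm (b 0, b 1) + 1 := le_add_self
      have hfbn : dm (b 0, b 1) + 1 ≤ n :=
        le_trans (Finset.le_sup (f := fun m => dm (m 0, m 1) + 1)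
          (Finset.mem_filter.mpr ⟨hbsupp, hbbad⟩)) hF
      -- new measure strictly smaller
      have hnew : ∀ m ∈ F'.support.filter (fun m => ¬(m 0 < q ∧ m 1 < μ)),
          dm (m 0, m 1) + 1 < dm (b 0, b 1) + 1 := by
        intro m hm
        rw [Finset.mem_filter] at hm
        obtain ⟨hmsupp, hmbad⟩ := hm
        have hmb : m ≠ b := by
          rintro rfl
          have hz : F'.coeff m = 0 := by simp [hF', coeff_sub, hGc]
          exact mem_support_iff.mp hmsupp hz
        have hmne : dm (m 0, m 1) ≠ dm (b 0, b 1) := fun hEq =>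
          hmb (pr_inj (congrArg Prod.fst (dm_inj hEq)) (congrArg Prod.snd (dm_inj hEq)))
        have hin : m ∈ F.support ∨ m ∈ G.support := by
          by_contra hcon
          push_neg at hcon
          have hc1 : F.coeff m = 0 := notMem_support_iff.mp hcon.1
          have hc2 : G.coeff m = 0 := notMem_support_iff.mp hcon.2
          have hz : F'.coeff m = 0 := by simp [hF', coeff_sub, hc1, hc2]
          exact mem_support_iff.mp hmsupp hz
        rcases hin with hmF | hmG
        · have := hbmax m (Finset.mem_filter.mpr ⟨hmF, hmbad⟩)
          omega
        · rcases hGsupp m hmG with h | h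
          · exact absurd h hmb
          · have := dm_lt h; omega
      have hsup' : (F'.support.filter (fun m => ¬(m 0 < q ∧ m 1 < μ))).sup
          (fun m => dm (m 0, m 1) + 1) ≤ n - 1 := by
        apply Finset.sup_le
        intro m hm
        have := hnew m hm
        omega
      obtain ⟨r, hr1, hr2⟩ := IH (n - 1) (by omega) F' hsup'
      refine ⟨r, ?_, hr2⟩
      have : F - r = (F' - r) + G := by rw [hF']; ring
      rw [this]
      exact Ideal.add_mem _ hr1 hGspan
    · refine ⟨F, ?_, ?_⟩
      · simp
      · intro m hm
        by_contra hcon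
        exact hbad ⟨m, Finset.mem_filter.mpr ⟨hm, hcon⟩⟩

open Classical in
/-- A polynomial vanishing at `p'` and equal to `1` at `p` (when `p ≠ p'`). -/
noncomputable def sep (p p' : K × K) : MvPolynomial (Fin 2) K :=
  if p.1 ≠ p'.1 then (X 0 - C p'.1) * C (p.1 - p'.1)⁻¹
  else (X 1 - C p'.2) * C (p.2 - p'.2)⁻¹

lemma sep_eval_self (p p' : K × K) : eval ![p'.1, p'.2] (sep p p') = 0 := by
  unfold sep; split_ifs with h <;> simp

lemma sep_eval_ne (p p' : K × K) (h : p ≠ p') : eval ![p.1, p.2] (sep p p') = 1 := by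
  unfold sep; split_ifs with h1
  · simp only [map_mul, map_sub, eval_X, eval_C, Matrix.cons_val_zero]
    exact mul_inv_cancel₀ (sub_ne_zero.mpr h1)
  · push_neg at h1
    have h2 : p.2 ≠ p'.2 := by
      intro h2
      exact h (Prod.ext h1 h2)
    simp only [map_mul, map_sub, eval_X, eval_C, Matrix.cons_val_one, Matrix.head_cons]
    exact mul_inv_cancel₀ (sub_ne_zero.mpr h2)

lemma interp (D : Finset (K × K)) (t : K × K → K) :
    ∃ F : MvPolynomial (Fin 2) K, ∀ p ∈ D, eval ![p.1, p.2] F = t p := by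
  classical
  refine ⟨∑ p ∈ D, C (t p) * ∏ p' ∈ D.erase p, sep p p', fun p hp => ?_⟩
  rw [map_sum, Finset.sum_eq_single_of_mem p hp]
  · rw [map_mul, eval_C, map_prod, Finset.prod_eq_one, mul_one]
    intro p' hp'
    exact sep_eval_ne p p' (fun hEq => (Finset.ne_of_mem_erase hp') hEq.symm)
  · intro p'' hp'' hne
    rw [map_mul, map_prod,
      Finset.prod_eq_zero (Finset.mem_erase.mpr ⟨fun hEq => hne hEq.symm, hp⟩)
        (sep_eval_self p'' p), mul_zero]

noncomputable def sf (q μ : ℕ) (ij : Fin q × Fin μ) : Fin 2 →₀ ℕ :=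
  Finsupp.single 0 (ij.1 : ℕ) + Finsupp.single 1 (ij.2 : ℕ)

lemma sf_apply0 (q μ : ℕ) (ij : Fin q × Fin μ) : sf q μ ij 0 = (ij.1 : ℕ) :=
  sigma_apply0 _ _

lemma sf_apply1 (q μ : ℕ) (ij : Fin q × Fin μ) : sf q μ ij 1 = (ij.2 : ℕ) :=
  sigma_apply1 _ _

lemma sf_inj (q μ : ℕ) : Function.Injective (sf q μ) := by
  intro a b hab
  have h0 : (a.1 : ℕ) = b.1 := by rw [← sf_apply0 q μ a, ← sf_apply0 q μ b, hab]
  have h1 : (a.2 : ℕ) = b.2 := by rw [← sf_apply1 q μ a, ← sf_apply1 q μ b, hab]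
  exact Prod.ext (Fin.ext h0) (Fin.ext h1)

noncomputable def Phi (q μ : ℕ) (c : Fin q × Fin μ → K) : MvPolynomial (Fin 2) K :=
  ∑ ij : Fin q × Fin μ, monomial (sf q μ ij) (c ij)

lemma Phi_coeff (q μ : ℕ) (c : Fin q × Fin μ → K) (ij : Fin q × Fin μ) :
    coeff (sf q μ ij) (Phi q μ c) = c ij := by
  classical
  rw [Phi, coeff_sum, Finset.sum_eq_single_of_mem ij (Finset.mem_univ _)]
  · rw [coeff_monomial, if_pos rfl]
  · intro b _ hb
    rw [coeff_monomial, if_neg (fun hEq => hb (sf_inj q μ hEq))]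

lemma Phi_bad (q μ : ℕ) (c : Fin q × Fin μ → K) (m : Fin 2 →₀ ℕ)
    (hm : ¬(m 0 < q ∧ m 1 < μ)) : coeff m (Phi q μ c) = 0 := by
  classical
  rw [Phi, coeff_sum]
  apply Finset.sum_eq_zero
  intro ij _
  rw [coeff_monomial, if_neg]
  intro hEq
  apply hm
  constructor
  · rw [← hEq, sf_apply0]; exact ij.1.isLt
  · rw [← hEq, sf_apply1]; exact ij.2.isLt

lemma Phi_supp (q μ : ℕ) (c : Fin q × Fin μ → K) :
    ∀ m ∈ (Phi q μ c).support, m 0 < q ∧ m 1 < μ := by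
  intro m hm
  by_contra hcon
  exact mem_support_iff.mp hm (Phi_bad q μ c m hcon)

lemma Phi_add (q μ : ℕ) (a b : Fin q × Fin μ → K) :
    Phi q μ (a + b) = Phi q μ a + Phi q μ b := by
  simp [Phi, Finset.sum_add_distrib]

lemma Phi_smul (q μ : ℕ) (r : K) (a : Fin q × Fin μ → K) :
    Phi q μ (r • a) = r • Phi q μ a := by
  simp [Phi, Finset.smul_sum, smul_monomial]

noncomputable def psi (D : Finset (K × K)) (q μ : ℕ) :
    ((Fin q × Fin μ) → K) →ₗ[K] (D → K) where
  toFun c p := eval ![(p : K × K).1, (p : K × K).2] (Phi q μ c)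
  map_add' a b := by funext p; simp [Phi_add]
  map_smul' r a := by funext p; simp [Phi_smul, smul_eval]

end Stmt18Aux

open Stmt18Aux in
/-- If `D` lies on the Hermitian curve and the sous-escalier of the initial ideal of its
vanishing ideal is exactly the set of divisors of `x^{q-1} y^{μ-1}` (1 ≤ μ ≤ q-1), then
`|D| = μq` and `I_D = ⟨F₁, F₂⟩` for polynomials with leading monomials `x^q` and `y^μ`. -/
theorem stmt18 (K : Type*) [Field K] (q : ℕ) (hq : 2 ≤ q)
    (D : Finset (K × K)) (hD : ∀ p ∈ D, p.1 ^ (q + 1) = p.2 ^ q + p.2)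
    (μ : ℕ) (hμ1 : 1 ≤ μ) (hμ2 : μ ≤ q - 1)
    (hstair : ∀ u v : ℕ,
      ((X 0 ^ u * X 1 ^ v : MvPolynomial (Fin 2) K) ∉ initialIdeal (vanIdeal D)) ↔
        (u ≤ q - 1 ∧ v ≤ μ - 1)) :
    D.card = μ * q ∧
    ∃ F₁ F₂ : MvPolynomial (Fin 2) K, F₁ ∈ vanIdeal D ∧ F₂ ∈ vanIdeal D ∧
      IsLM F₁ q 0 ∧ IsLM F₂ 0 μ ∧ vanIdeal D = Ideal.span {F₁, F₂} := by
  classical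
  have hstairMem : ∀ u v : ℕ,
      ((X 0 ^ u * X 1 ^ v : MvPolynomial (Fin 2) K) ∈ initialIdeal (vanIdeal D)) →
        ¬(u ≤ q - 1 ∧ v ≤ μ - 1) := fun u v hm hgood => (hstair u v).mpr hgood hm
  have hmono : ∀ r s : ℕ, (X 0 ^ r * X 1 ^ s : MvPolynomial (Fin 2) K) =
      monomial (Finsupp.single 0 r + Finsupp.single 1 s) 1 := by
    intro r s; rw [X_pow_eq_monomial, X_pow_eq_monomial, monomial_mul, mul_one]
  -- extraction of a generator dividing a given monomial of the initial ideal
  have hdiv : ∀ τ : Fin 2 →₀ ℕ, (monomial τ (1 : K)) ∈ initialIdeal (vanIdeal D) →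
      ∃ F ∈ vanIdeal D, ∃ r s : ℕ, IsLM F r s ∧ r ≤ τ 0 ∧ s ≤ τ 1 := by
    intro τ hτ
    have himg : initialIdeal (vanIdeal D) = Ideal.span ((fun σ => monomial σ (1 : K)) ''
        {σ : Fin 2 →₀ ℕ | ∃ F ∈ vanIdeal D, ∃ r s : ℕ, IsLM F r s ∧
          σ = Finsupp.single 0 r + Finsupp.single 1 s}) := by
      unfold initialIdeal
      congr 1
      ext m
      simp only [Set.mem_image, Set.mem_setOf_eq]
      constructor
      · rintro ⟨F, hF, r, s, hlm, rfl⟩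
        exact ⟨_, ⟨F, hF, r, s, hlm, rfl⟩, (hmono r s).symm⟩
      · rintro ⟨σ, ⟨F, hF, r, s, hlm, rfl⟩, rfl⟩
        exact ⟨F, hF, r, s, hlm, (hmono r s).symm⟩
    rw [himg] at hτ
    obtain ⟨σ, hσS, hσle⟩ := mem_ideal_span_monomial_image.mp hτ τ (by
      rw [mem_support_iff, coeff_monomial, if_pos rfl]; exact one_ne_zero)
    obtain ⟨F, hF, r, s, hlm, rfl⟩ := hσS
    refine ⟨F, hF, r, s, hlm, ?_, ?_⟩
    · have := Finsupp.le_def.mp hσle 0; rwa [sigma_apply0] at this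
    · have := Finsupp.le_def.mp hσle 1; rwa [sigma_apply1] at this
  -- construction of F₁
  have hm1 : (monomial (Finsupp.single (0 : Fin 2) q + Finsupp.single (1 : Fin 2) 0) (1 : K)) ∈
      initialIdeal (vanIdeal D) := by
    rw [← hmono q 0]
    by_contra hn
    have := (hstair q 0).mp hn
    omega
  obtain ⟨F₁, hF₁, r₁, s₁, hlm₁', hr₁, hs₁⟩ := hdiv _ hm1
  rw [sigma_apply0] at hr₁
  rw [sigma_apply1] at hs₁
  have hmem₁ : (X 0 ^ r₁ * X 1 ^ s₁ : MvPolynomial (Fin 2) K) ∈ initialIdeal (vanIdeal D) :=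
    Ideal.subset_span ⟨F₁, hF₁, r₁, s₁, hlm₁', rfl⟩
  have hbad₁ := hstairMem r₁ s₁ hmem₁
  have hr₁q : r₁ = q := by omega
  have hs₁0 : s₁ = 0 := by omega
  rw [hr₁q, hs₁0] at hlm₁'
  -- construction of F₂
  have hm2 : (monomial (Finsupp.single (0 : Fin 2) 0 + Finsupp.single (1 : Fin 2) μ) (1 : K)) ∈
      initialIdeal (vanIdeal D) := by
    rw [← hmono 0 μ]
    by_contra hn
    have := (hstair 0 μ).mp hn
    omega
  obtain ⟨F₂, hF₂, r₂, s₂, hlm₂', hr₂, hs₂⟩ := hdiv _ hm2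
  rw [sigma_apply0] at hr₂
  rw [sigma_apply1] at hs₂
  have hmem₂ : (X 0 ^ r₂ * X 1 ^ s₂ : MvPolynomial (Fin 2) K) ∈ initialIdeal (vanIdeal D) :=
    Ideal.subset_span ⟨F₂, hF₂, r₂, s₂, hlm₂', rfl⟩
  have hbad₂ := hstairMem r₂ s₂ hmem₂
  have hr₂0 : r₂ = 0 := by omega
  have hs₂μ : s₂ = μ := by omega
  rw [hr₂0, hs₂μ] at hlm₂'
  -- key vanishing lemma
  have hzero : ∀ G ∈ vanIdeal D, (∀ m ∈ G.support, m 0 < q ∧ m 1 < μ) → G = 0 := by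
    intro G hG hsupp
    by_contra hne
    obtain ⟨r, s, hlm, -⟩ := exists_isLM G hne
    have hgood := hsupp _ hlm.1
    rw [sigma_apply0, sigma_apply1] at hgood
    exact (hstair r s).mpr ⟨by omega, by omega⟩ (Ideal.subset_span ⟨G, hG, r, s, hlm, rfl⟩)
  -- the span is contained in the vanishing ideal
  have hsub : Ideal.span {F₁, F₂} ≤ vanIdeal D := by
    rw [Ideal.span_le]
    rintro f hf
    simp only [Set.mem_insert_iff, Set.mem_singleton_iff] at hf
    rcases hf with rfl | rfl
    · exact hF₁
    · exact hF₂
  -- the ideals are equal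
  have hEq : vanIdeal D = Ideal.span {F₁, F₂} := by
    refine le_antisymm ?_ hsub
    intro F hF
    obtain ⟨rr, hrr1, hrr2⟩ := reduce F₁ F₂ hlm₁' hlm₂' F
    have hrvan : rr ∈ vanIdeal D := by
      have hFr : rr = F - (F - rr) := by ring
      rw [hFr]
      exact Ideal.sub_mem _ hF (hsub hrr1)
    have h0 := hzero rr hrvan hrr2
    rw [h0, sub_zero] at hrr1
    exact hrr1
  -- bijectivity of psi
  have hinj : Function.Injective (psi D q μ) := by
    rw [injective_iff_map_eq_zero]
    intro c hc
    have hvan : Phi q μ c ∈ vanIdeal D := by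
      rw [mem_vanIdeal]
      intro p hp
      exact congrFun hc ⟨p, hp⟩
    have h0 := hzero _ hvan (Phi_supp q μ c)
    funext ij
    have h2 := Phi_coeff q μ c ij
    rw [h0, coeff_zero] at h2
    exact h2.symm
  have hsurj : Function.Surjective (psi D q μ) := by
    intro t
    obtain ⟨F, hFt⟩ := interp D (fun p => if h : p ∈ D then t ⟨p, h⟩ else 0)
    obtain ⟨rr, hrr1, hrr2⟩ := reduce F₁ F₂ hlm₁' hlm₂' F
    refine ⟨fun ij => coeff (sf q μ ij) rr, ?_⟩
    have hΦr : Phi q μ (fun ij => coeff (sf q μ ij) rr) = rr := by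
      apply MvPolynomial.ext
      intro m
      by_cases hgood : m 0 < q ∧ m 1 < μ
      · have hm : m = sf q μ (⟨m 0, hgood.1⟩, ⟨m 1, hgood.2⟩) := by
          apply pr_inj
          · rw [sf_apply0]
          · rw [sf_apply1]
        rw [hm, Phi_coeff]
      · rw [Phi_bad q μ _ m hgood]
        exact (notMem_support_iff.mp (fun hmem => hgood (hrr2 m hmem))).symm
    funext p
    show eval ![(p : K × K).1, (p : K × K).2] (Phi q μ fun ij => coeff (sf q μ ij) rr) = t p
    rw [hΦr]
    have hFr : eval ![(p : K × K).1, (p : K × K).2] (F - rr) = 0 :=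
      mem_vanIdeal.mp (hsub hrr1) (p : K × K) p.2
    rw [map_sub] at hFr
    rw [← sub_eq_zero.mp hFr, hFt (p : K × K) p.2, dif_pos p.2]
  have e := LinearEquiv.ofBijective (psi D q μ) ⟨hinj, hsurj⟩
  have hfr := LinearEquiv.finrank_eq e
  rw [Module.finrank_pi, Module.finrank_pi] at hfr
  refine ⟨?_, F₁, F₂, hF₁, hF₂, hlm₁', hlm₂', hEq⟩
  rw [← Fintype.card_coe D, ← hfr, Fintype.card_prod, Fintype.card_fin, Fintype.card_fin,
    mul_comm]
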